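/- For n ≥ 3, let σ = σ_1σ_2⋯σ_{n-1} ∈ Br_n. Then Br_n is generated by σ_1 and σ (indeed σ_{i+1} = σ^i σ_1 σ^{-i} for i = 1, …, n-2), and the group presented with two generators a, b and relations a b^i a b^{-i} = b^i a b^{-i} a for all integers i with 2 ≤ i ≤ n/2, together with b^n = (b a)^{n-1}, is isomorphic to Br_n via the homomorphism sending a ↦ σ_1 and b ↦ σ. -/

import Mathlib

/-- The braid relations on `m` generators `σ_1, …, σ_m` (0-indexed as `σ 0, …, σ (m-1)`):
`σ_i σ_j = σ_j σ_i` for `|i - j| > 1` and `σ_i σ_{i+1} σ_i = σ_{i+1} σ_i σ_{i+1}`. -/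
def braidRels (m : ℕ) : Set (FreeGroup (Fin m)) :=
  {r | (∃ i j : Fin m, (i : ℕ) + 1 < (j : ℕ) ∧
        r = FreeGroup.of i * FreeGroup.of j * (FreeGroup.of i)⁻¹ * (FreeGroup.of j)⁻¹) ∨
       (∃ i j : Fin m, (i : ℕ) + 1 = (j : ℕ) ∧
        r = FreeGroup.of i * FreeGroup.of j * FreeGroup.of i *
            (FreeGroup.of j * FreeGroup.of i * FreeGroup.of j)⁻¹)}

/-- The braid group `Br_n` on `n` strands, presented with generators `σ_1, …, σ_{n-1}`
(0-indexed) and the braid relations. -/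
abbrev BraidGroup (n : ℕ) : Type := PresentedGroup (braidRels (n - 1))

/-- The standard generator `σ_{i+1}` of `Br_n` (0-indexed: `σ i` is the paper's `σ_{i+1}`). -/
def σ {n : ℕ} (i : Fin (n - 1)) : BraidGroup n := PresentedGroup.of i

/-- The relations of Artin's two-generator presentation of `Br_n`: generators `a` (= `of 0`)
and `b` (= `of 1`), relations `a bⁱ a b⁻ⁱ = bⁱ a b⁻ⁱ a` for integers `2 ≤ i ≤ n/2`
(equivalently `2 ≤ i` and `2i ≤ n`), and `bⁿ = (ba)ⁿ⁻¹`. -/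
def twoGenRels (n : ℕ) : Set (FreeGroup (Fin 2)) :=
  {r | (∃ i : ℕ, 2 ≤ i ∧ 2 * i ≤ n ∧
        r = FreeGroup.of 0 * (FreeGroup.of 1) ^ i * FreeGroup.of 0 * ((FreeGroup.of 1) ^ i)⁻¹ *
            ((FreeGroup.of 1) ^ i * FreeGroup.of 0 * ((FreeGroup.of 1) ^ i)⁻¹ *
              FreeGroup.of 0)⁻¹) ∨
       r = (FreeGroup.of 1) ^ n * ((FreeGroup.of 1 * FreeGroup.of 0) ^ (n - 1))⁻¹}

section Generic
variable {G : Type*} [Group G]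

/-- `∏_{j<k} bʲ a b⁻ʲ = (ab)^k (b^k)⁻¹`. -/
lemma conj_prod_eq (a b : G) (k : ℕ) :
    (List.ofFn fun j : Fin k => b ^ (j : ℕ) * a * (b ^ (j : ℕ))⁻¹).prod
      = (a * b) ^ k * (b ^ k)⁻¹ := by
  induction k with
  | zero => simp
  | succ k ih =>
    rw [List.ofFn_succ', List.concat_eq_append, List.prod_append]
    simp only [Fin.coe_castSucc, Fin.val_last, List.prod_cons, List.prod_nil, mul_one]
    rw [ih]
    simp [pow_succ, mul_inv_rev, mul_assoc]

lemma ofFn_prod_split {m : ℕ} (f : Fin m → G) (i : ℕ) (h : i + 2 ≤ m) :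
    (List.ofFn f).prod =
      ((List.ofFn f).take i).prod * f ⟨i, by omega⟩ * f ⟨i + 1, by omega⟩ *
        ((List.ofFn f).drop (i + 2)).prod := by
  conv_lhs => rw [← List.prod_take_mul_prod_drop (List.ofFn f) i]
  rw [List.drop_eq_getElem_cons (l := List.ofFn f) (by simp; omega)]
  rw [List.drop_eq_getElem_cons (l := List.ofFn f) (i := i + 1) (by simp; omega)]
  simp [List.getElem_ofFn, mul_assoc]

end Generic

section Braid
variable {m : ℕ}

lemma braid_mk_rel {r : FreeGroup (Fin m)} (h : r ∈ braidRels m) :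
    PresentedGroup.mk (braidRels m) r = 1 :=
  (QuotientGroup.eq_one_iff r).mpr (Subgroup.subset_normalClosure h)

lemma braid_comm (i j : Fin m) (h : (i : ℕ) + 1 < (j : ℕ)) :
    (PresentedGroup.of i : PresentedGroup (braidRels m)) * PresentedGroup.of j
      = PresentedGroup.of j * PresentedGroup.of i := by
  have h1 := braid_mk_rel (m := m) (Or.inl ⟨i, j, h, rfl⟩)
  simp only [map_mul, map_inv] at h1
  rw [mul_inv_eq_one, mul_inv_eq_iff_eq_mul] at h1
  exact h1

lemma braid_braid (i j : Fin m) (h : (i : ℕ) + 1 = (j : ℕ)) :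
    (PresentedGroup.of i : PresentedGroup (braidRels m)) * PresentedGroup.of j *
        PresentedGroup.of i
      = PresentedGroup.of j * PresentedGroup.of i * PresentedGroup.of j := by
  have h1 := braid_mk_rel (m := m) (Or.inr ⟨i, j, h, rfl⟩)
  simp only [map_mul, map_inv] at h1
  rw [mul_inv_eq_one] at h1
  exact h1

/-- `δ = σ_0 σ_1 ⋯ σ_{m-1}`. -/
def braidDelta (m : ℕ) : PresentedGroup (braidRels m) :=
  (List.ofFn fun k : Fin m => (PresentedGroup.of k : PresentedGroup (braidRels m))).prod

lemma braid_delta_conj (i : ℕ) (h : i + 2 ≤ m) :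
    braidDelta m * PresentedGroup.of ⟨i, by omega⟩
      = PresentedGroup.of ⟨i + 1, by omega⟩ * braidDelta m := by
  set l := List.ofFn fun k : Fin m => (PresentedGroup.of k : PresentedGroup (braidRels m)) with hl
  set x : PresentedGroup (braidRels m) := PresentedGroup.of ⟨i, by omega⟩ with hx
  set y : PresentedGroup (braidRels m) := PresentedGroup.of ⟨i + 1, by omega⟩ with hy
  have hT : Commute y ((l.take i).prod) := by
    apply Commute.list_prod_right
    intro z hz
    rw [List.mem_iff_getElem] at hz
    obtain ⟨k, hk, rfl⟩ := hz
    have hki : k < i ∧ k < m := by simpa [hl] using hk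
    simp only [hl, List.getElem_take, List.getElem_ofFn]
    exact (braid_comm ⟨k, by omega⟩ ⟨i + 1, by omega⟩ (by simp; omega)).symm
  have hD : Commute x ((l.drop (i + 2)).prod) := by
    apply Commute.list_prod_right
    intro z hz
    rw [List.mem_iff_getElem] at hz
    obtain ⟨k, hk, rfl⟩ := hz
    have hki : i + 2 + k < m := by
      have := hk; simp [hl] at this; omega
    simp only [hl, List.getElem_drop, List.getElem_ofFn]
    exact braid_comm ⟨i, by omega⟩ ⟨i + 2 + k, by omega⟩ (by simp; omega)
  have hsplit : braidDelta m = (l.take i).prod * x * y * (l.drop (i + 2)).prod := by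
    rw [braidDelta, ← hl]
    exact ofFn_prod_split _ i h
  have hbb : x * y * x = y * x * y := braid_braid _ _ (by simp)
  set T := (l.take i).prod
  set D := (l.drop (i + 2)).prod
  rw [hsplit]
  simp only [mul_assoc]
  rw [← hD.eq]
  have key : x * (y * (x * D)) = y * (x * (y * D)) := by
    have h2 := congrArg (· * D) hbb
    simpa [mul_assoc] using h2
  rw [key]
  simp only [← mul_assoc]
  rw [← hT.eq]

lemma braid_pow_conj : ∀ i : ℕ, ∀ h : i < m,
    braidDelta m ^ i * PresentedGroup.of ⟨0, Nat.zero_lt_of_lt h⟩ * (braidDelta m ^ i)⁻¹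
      = PresentedGroup.of ⟨i, h⟩
  | 0, h => by simp
  | (i + 1), h => by
    have ih := braid_pow_conj i (by omega)
    have hc := braid_delta_conj (m := m) i (by omega)
    have hc' : braidDelta m * PresentedGroup.of (⟨i, by omega⟩ : Fin m) * (braidDelta m)⁻¹
        = PresentedGroup.of ⟨i + 1, h⟩ := by
      rw [hc, mul_assoc, mul_inv_cancel, mul_one]
    have e : braidDelta m ^ (i + 1) * PresentedGroup.of ⟨0, Nat.zero_lt_of_lt h⟩ *
          (braidDelta m ^ (i + 1))⁻¹
        = braidDelta m * (braidDelta m ^ i * PresentedGroup.of ⟨0, Nat.zero_lt_of_lt h⟩ *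
            (braidDelta m ^ i)⁻¹) * (braidDelta m)⁻¹ := by
      rw [pow_succ', mul_inv_rev]
      simp only [mul_assoc]
    rw [e, ih, hc']

lemma braid_delta_pow (hm : 1 ≤ m) :
    braidDelta m ^ (m + 1) =
      (braidDelta m * PresentedGroup.of ⟨0, by omega⟩) ^ m := by
  set a : PresentedGroup (braidRels m) := PresentedGroup.of ⟨0, by omega⟩ with ha
  have h1 : (List.ofFn fun j : Fin m =>
      braidDelta m ^ (j : ℕ) * a * (braidDelta m ^ (j : ℕ))⁻¹).prod
      = (a * braidDelta m) ^ m * (braidDelta m ^ m)⁻¹ := conj_prod_eq a (braidDelta m) m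
  have hfun : (fun j : Fin m => braidDelta m ^ (j : ℕ) * a * (braidDelta m ^ (j : ℕ))⁻¹)
      = fun j : Fin m => (PresentedGroup.of j : PresentedGroup (braidRels m)) := by
    funext j
    have := braid_pow_conj (m := m) (j : ℕ) j.2
    simpa [ha, Fin.eta] using this
  have h2 : (List.ofFn fun j : Fin m =>
      braidDelta m ^ (j : ℕ) * a * (braidDelta m ^ (j : ℕ))⁻¹).prod = braidDelta m := by
    rw [hfun]; rfl
  have h2' : braidDelta m * braidDelta m ^ m = (a * braidDelta m) ^ m := by
    have := congrArg (· * braidDelta m ^ m) (h2.symm.trans h1)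
    simpa only [inv_mul_cancel_right] using this
  have h3 : braidDelta m ^ (m + 1) = (a * braidDelta m) ^ m := by
    rw [pow_succ']; exact h2'
  have hsc : SemiconjBy (braidDelta m) (a * braidDelta m) (braidDelta m * a) := by
    unfold SemiconjBy; group
  have h4 : braidDelta m * (a * braidDelta m) ^ m = (braidDelta m * a) ^ m * braidDelta m :=
    (hsc.pow_right m).eq
  have h5 : braidDelta m * braidDelta m ^ (m + 1) = (braidDelta m * a) ^ m * braidDelta m := by
    rw [h3]; exact h4
  have h6 : braidDelta m * braidDelta m ^ (m + 1) * (braidDelta m)⁻¹ = braidDelta m ^ (m + 1) := by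
    rw [← pow_succ', pow_succ (braidDelta m) (m + 1), mul_inv_cancel_right]
  rw [← h6, h5, mul_inv_cancel_right]

end Braid

section TwoGen
variable {n : ℕ}

/-- `a` in the two-generator presentation. -/
def gA (n : ℕ) : PresentedGroup (twoGenRels n) := PresentedGroup.of 0

/-- `b` in the two-generator presentation. -/
def gB (n : ℕ) : PresentedGroup (twoGenRels n) := PresentedGroup.of 1

lemma two_mk_rel {r : FreeGroup (Fin 2)} (h : r ∈ twoGenRels n) :
    PresentedGroup.mk (twoGenRels n) r = 1 :=
  (QuotientGroup.eq_one_iff r).mpr (Subgroup.subset_normalClosure h)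

lemma two_rel2 : gB n ^ n = (gB n * gA n) ^ (n - 1) := by
  have h1 := two_mk_rel (n := n) (Or.inr rfl)
  simp only [map_mul, map_inv, map_pow] at h1
  rw [mul_inv_eq_one] at h1
  exact h1

lemma two_rel1 (i : ℕ) (h2 : 2 ≤ i) (hn2 : 2 * i ≤ n) :
    gA n * (gB n ^ i * gA n * (gB n ^ i)⁻¹) = gB n ^ i * gA n * (gB n ^ i)⁻¹ * gA n := by
  have h1 := two_mk_rel (n := n) (Or.inl ⟨i, h2, hn2, rfl⟩)
  simp only [map_mul, map_inv, map_pow] at h1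
  rw [mul_inv_eq_one] at h1
  simp only [mul_assoc] at h1 ⊢
  exact h1

lemma two_central : gB n ^ n * gA n = gA n * gB n ^ n := by
  have h1 : gB n ^ n * (gB n * gA n) = gB n * gA n * gB n ^ n := by
    rw [two_rel2]; exact ((Commute.refl (gB n * gA n)).pow_left (n - 1)).eq
  have hcomm : gB n * gB n ^ n = gB n ^ n * gB n :=
    (pow_succ' (gB n) n).symm.trans (pow_succ (gB n) n)
  have h2 : gB n * (gB n ^ n * gA n) = gB n * (gA n * gB n ^ n) := by
    rw [← mul_assoc, hcomm, mul_assoc, h1, mul_assoc]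
  exact mul_left_cancel h2

lemma two_comm_tau (k : ℕ) (h2 : 2 ≤ k) (hk : k ≤ n - 2) (hn : 3 ≤ n) :
    gA n * (gB n ^ k * gA n * (gB n ^ k)⁻¹) = gB n ^ k * gA n * (gB n ^ k)⁻¹ * gA n := by
  by_cases hc : 2 * k ≤ n
  · exact two_rel1 k h2 hc
  · set k' := n - k with hk'def
    have hk'2 : 2 ≤ k' := by omega
    have hk'n : 2 * k' ≤ n := by omega
    have hnk : k' + k = n := by omega
    have h1 := two_rel1 (n := n) k' hk'2 hk'n
    have e1 : gB n ^ k' * gB n ^ k = gB n ^ n := by rw [← pow_add, hnk]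
    have hconj : gB n ^ k' * (gB n ^ k * gA n * (gB n ^ k)⁻¹) * (gB n ^ k')⁻¹ = gA n := by
      calc gB n ^ k' * (gB n ^ k * gA n * (gB n ^ k)⁻¹) * (gB n ^ k')⁻¹
          = gB n ^ k' * gB n ^ k * gA n * (gB n ^ k' * gB n ^ k)⁻¹ := by
            rw [mul_inv_rev]; simp only [mul_assoc]
        _ = gB n ^ n * gA n * (gB n ^ n)⁻¹ := by rw [e1]
        _ = gA n := by rw [two_central, mul_inv_cancel_right]
    have hXY : gB n ^ k * gA n * (gB n ^ k)⁻¹ = (gB n ^ k')⁻¹ * gA n * gB n ^ k' := by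
      have h3 := congrArg (fun z => (gB n ^ k')⁻¹ * z * gB n ^ k') hconj
      simp only [mul_assoc, inv_mul_cancel_left, mul_inv_cancel_left, inv_mul_cancel,
        mul_inv_cancel, mul_one, one_mul] at h3
      simpa [mul_assoc] using h3
    rw [hXY]
    have h1' := congrArg (fun z => (gB n ^ k')⁻¹ * z * gB n ^ k') h1
    simp only [mul_assoc, inv_mul_cancel_left, mul_inv_cancel_left, inv_mul_cancel,
      mul_inv_cancel, mul_one, one_mul] at h1'
    simp only [mul_assoc]
    exact h1'.symm

lemma two_prodB (hn : 3 ≤ n) :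
    (List.ofFn fun j : Fin (n - 1) => gB n ^ (j : ℕ) * gA n * (gB n ^ (j : ℕ))⁻¹).prod
      = gB n := by
  rw [conj_prod_eq]
  have hAB : (gA n * gB n) ^ (n - 1) = gB n ^ n := by
    have hsc : SemiconjBy (gA n) (gB n * gA n) (gA n * gB n) := by
      unfold SemiconjBy; group
    have h4 := (hsc.pow_right (n - 1)).eq
    rw [← two_rel2, ← two_central] at h4
    exact (mul_right_cancel h4).symm
  rw [hAB]
  have hpow : gB n ^ n = gB n * gB n ^ (n - 1) := by
    rw [← pow_succ']
    congr 1
    omega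
  rw [hpow, mul_inv_cancel_right]

lemma two_braid (hn : 3 ≤ n) :
    gA n * (gB n * gA n * (gB n)⁻¹) * gA n
      = gB n * gA n * (gB n)⁻¹ * gA n * (gB n * gA n * (gB n)⁻¹) := by
  set t := gB n * gA n * (gB n)⁻¹ with ht
  set l := List.ofFn fun j : Fin (n - 1) => gB n ^ (j : ℕ) * gA n * (gB n ^ (j : ℕ))⁻¹ with hl
  have hlen : l.length = n - 1 := by simp [hl]
  have h0lt : 0 < l.length := by omega
  have h1lt : 1 < l.length := by omega
  set Q := (l.drop 2).prod with hQdef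
  have hcons : l = l[0] :: l[1] :: l.drop 2 := by
    conv_lhs => rw [← List.drop_zero (l := l), List.drop_eq_getElem_cons h0lt,
      List.drop_eq_getElem_cons h1lt]
  have h0 : l[0]'h0lt = gA n := by
    simp [hl, List.getElem_ofFn]
  have h1 : l[1]'h1lt = t := by
    simp [hl, List.getElem_ofFn, ht]
  have hp : l.prod = gA n * (t * Q) := by
    conv_lhs => rw [hcons]
    rw [List.prod_cons, List.prod_cons, h0, h1, hQdef]
  have hQ : Commute (gA n) Q := by
    apply Commute.list_prod_right
    intro z hz
    rw [List.mem_iff_getElem] at hz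
    obtain ⟨k, hk, rfl⟩ := hz
    have hkb : 2 + k < n - 1 := by
      have := hk; simp [hl] at this; omega
    simp only [hl, List.getElem_drop, List.getElem_ofFn, Fin.val_mk]
    exact two_comm_tau (n := n) (2 + k) (by omega) (by omega) hn
  have hB : gB n = gA n * (t * Q) := by rw [← two_prodB hn, ← hl, hp]
  have hkey : gA n * (t * Q) * gA n * (gA n * (t * Q))⁻¹
      = gA n * t * gA n * t⁻¹ * (gA n)⁻¹ := by
    rw [mul_inv_rev, mul_inv_rev]
    simp only [mul_assoc]
    rw [← mul_assoc Q (gA n), ← hQ.eq, mul_assoc (gA n) Q, mul_inv_cancel_left]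
  have ht2 : t = gA n * t * gA n * t⁻¹ * (gA n)⁻¹ := by
    calc t = gB n * gA n * (gB n)⁻¹ := ht
      _ = gA n * (t * Q) * gA n * (gA n * (t * Q))⁻¹ := by rw [← hB]
      _ = gA n * t * gA n * t⁻¹ * (gA n)⁻¹ := hkey
  have hfin : t * gA n * t = gA n * t * gA n := by
    nth_rewrite 1 [ht2]
    simp [mul_assoc]
  exact hfin.symm

end TwoGen

section Iso
variable {n : ℕ}

lemma braid_comm_pow {m : ℕ} (i : ℕ) (h2 : 2 ≤ i) (hi : i < m) :
    PresentedGroup.of (⟨0, by omega⟩ : Fin m) * braidDelta m ^ i *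
        PresentedGroup.of (⟨0, by omega⟩ : Fin m) * (braidDelta m ^ i)⁻¹
      = braidDelta m ^ i * PresentedGroup.of (⟨0, by omega⟩ : Fin m) * (braidDelta m ^ i)⁻¹ *
          PresentedGroup.of (⟨0, by omega⟩ : Fin m) := by
  have hc := braid_pow_conj (m := m) i hi
  have hcm := braid_comm (m := m) ⟨0, by omega⟩ ⟨i, hi⟩ (by simp; omega)
  calc PresentedGroup.of (⟨0, by omega⟩ : Fin m) * braidDelta m ^ i *
        PresentedGroup.of (⟨0, by omega⟩ : Fin m) * (braidDelta m ^ i)⁻¹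
      = PresentedGroup.of (⟨0, by omega⟩ : Fin m) * (braidDelta m ^ i *
          PresentedGroup.of (⟨0, by omega⟩ : Fin m) * (braidDelta m ^ i)⁻¹) := by
        simp only [mul_assoc]
    _ = PresentedGroup.of (⟨0, by omega⟩ : Fin m) * PresentedGroup.of ⟨i, hi⟩ := by rw [hc]
    _ = PresentedGroup.of ⟨i, hi⟩ * PresentedGroup.of ⟨0, by omega⟩ := hcm
    _ = braidDelta m ^ i * PresentedGroup.of (⟨0, by omega⟩ : Fin m) * (braidDelta m ^ i)⁻¹ *
          PresentedGroup.of ⟨0, Nat.zero_lt_of_lt hi⟩ := by rw [hc]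

/-- The map `a ↦ σ_1`, `b ↦ δ`. -/
def fPhi (n : ℕ) (hn : 3 ≤ n) : Fin 2 → BraidGroup n :=
  ![PresentedGroup.of ⟨0, Nat.sub_pos_of_lt (by omega)⟩, braidDelta (n - 1)]

lemma hPhi (hn : 3 ≤ n) : ∀ r ∈ twoGenRels n, FreeGroup.lift (fPhi n hn) r = 1 := by
  rintro r (⟨i, h2, hn2, rfl⟩ | rfl)
  · simp only [map_mul, map_inv, map_pow, FreeGroup.lift_apply_of, fPhi, Matrix.cons_val_zero,
      Matrix.cons_val_one, Matrix.head_cons]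
    rw [mul_inv_eq_one]
    exact braid_comm_pow i h2 (by omega)
  · simp only [map_mul, map_inv, map_pow, FreeGroup.lift_apply_of, fPhi, Matrix.cons_val_zero,
      Matrix.cons_val_one, Matrix.head_cons]
    rw [mul_inv_eq_one]
    have h1 : braidDelta (n - 1) ^ n = braidDelta (n - 1) ^ (n - 1 + 1) := by
      congr 1; omega
    rw [h1]
    exact braid_delta_pow (by omega)

/-- The map `σ_i ↦ bⁱ a b⁻ⁱ`. -/
def fPsi (n : ℕ) : Fin (n - 1) → PresentedGroup (twoGenRels n) :=
  fun i => gB n ^ (i : ℕ) * gA n * (gB n ^ (i : ℕ))⁻¹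

lemma hPsi (hn : 3 ≤ n) : ∀ r ∈ braidRels (n - 1), FreeGroup.lift (fPsi n) r = 1 := by
  rintro r (⟨i, j, hij, rfl⟩ | ⟨i, j, hij, rfl⟩)
  · simp only [map_mul, map_inv, FreeGroup.lift_apply_of]
    rw [mul_inv_eq_one, mul_inv_eq_iff_eq_mul]
    have hjlt : (j : ℕ) < n - 1 := j.2
    set k := (j : ℕ) - (i : ℕ) with hkdef
    have hjk : (j : ℕ) = (i : ℕ) + k := by omega
    have hcore := two_comm_tau (n := n) k (by omega) (by omega) hn
    have e1 : fPsi n i * fPsi n j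
        = gB n ^ (i : ℕ) * (gA n * (gB n ^ k * gA n * (gB n ^ k)⁻¹)) * (gB n ^ (i : ℕ))⁻¹ := by
      simp [fPsi, hjk, pow_add, mul_inv_rev, mul_assoc]
    have e2 : fPsi n j * fPsi n i
        = gB n ^ (i : ℕ) * (gB n ^ k * gA n * (gB n ^ k)⁻¹ * gA n) * (gB n ^ (i : ℕ))⁻¹ := by
      simp [fPsi, hjk, pow_add, mul_inv_rev, mul_assoc]
    rw [e1, e2, hcore]
  · simp only [map_mul, map_inv, FreeGroup.lift_apply_of]
    rw [mul_inv_eq_one]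
    have hj : (j : ℕ) = (i : ℕ) + 1 := hij.symm
    have e1 : fPsi n i * fPsi n j * fPsi n i
        = gB n ^ (i : ℕ) * (gA n * (gB n * gA n * (gB n)⁻¹) * gA n) * (gB n ^ (i : ℕ))⁻¹ := by
      simp [fPsi, hj, pow_succ, mul_inv_rev, mul_assoc]
    have e2 : fPsi n j * fPsi n i * fPsi n j
        = gB n ^ (i : ℕ) *
            (gB n * gA n * (gB n)⁻¹ * gA n * (gB n * gA n * (gB n)⁻¹)) * (gB n ^ (i : ℕ))⁻¹ := by
      simp [fPsi, hj, pow_succ, mul_inv_rev, mul_assoc]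
    rw [e1, e2, two_braid hn]

end Iso

/-- For `n ≥ 3`, let `σ = σ_1 σ_2 ⋯ σ_{n-1} ∈ Br_n`.  Then `σ_{i+1} = σ^i σ_1 σ^{-i}` for
`i = 1, …, n-2`, the group `Br_n` is generated by `σ_1` and `σ`, and the group presented by
two generators `a, b` subject to `a bⁱ a b⁻ⁱ = bⁱ a b⁻ⁱ a` (for `2 ≤ i ≤ n/2`) and
`bⁿ = (ba)ⁿ⁻¹` is isomorphic to `Br_n` via `a ↦ σ_1`, `b ↦ σ`. -/
theorem braid_two_generator_presentation (n : ℕ) (hn : 3 ≤ n) :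
    (∀ i : ℕ, ∀ _h1 : 1 ≤ i, ∀ _h2 : i ≤ n - 2,
      σ (⟨i, by omega⟩ : Fin (n - 1)) =
        (List.ofFn (fun k : Fin (n - 1) => σ k)).prod ^ i * σ (⟨0, by omega⟩ : Fin (n - 1)) *
          ((List.ofFn (fun k : Fin (n - 1) => σ k)).prod ^ i)⁻¹) ∧
    Subgroup.closure {σ (⟨0, by omega⟩ : Fin (n - 1)),
        (List.ofFn (fun k : Fin (n - 1) => σ k)).prod} = (⊤ : Subgroup (BraidGroup n)) ∧
    ∃ φ : PresentedGroup (twoGenRels n) ≃* BraidGroup n,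
      φ (PresentedGroup.of 0) = σ (⟨0, by omega⟩ : Fin (n - 1)) ∧
      φ (PresentedGroup.of 1) = (List.ofFn (fun k : Fin (n - 1) => σ k)).prod := by
  have hprod : (List.ofFn (fun k : Fin (n - 1) => σ k)).prod = braidDelta (n - 1) := rfl
  refine ⟨?_, ?_, ?_⟩
  · intro i h1 h2
    exact (braid_pow_conj (m := n - 1) i (by omega)).symm
  · rw [eq_top_iff, ← PresentedGroup.closure_range_of (braidRels (n - 1))]
    refine (Subgroup.closure_le _).2 ?_
    rintro x ⟨i, rfl⟩
    have ha : σ (⟨0, by omega⟩ : Fin (n - 1)) ∈ Subgroup.closure {σ (⟨0, by omega⟩ : Fin (n - 1)),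
        (List.ofFn (fun k : Fin (n - 1) => σ k)).prod} :=
      Subgroup.subset_closure (Set.mem_insert _ _)
    have hd : (List.ofFn (fun k : Fin (n - 1) => σ k)).prod ∈
        Subgroup.closure {σ (⟨0, by omega⟩ : Fin (n - 1)),
        (List.ofFn (fun k : Fin (n - 1) => σ k)).prod} :=
      Subgroup.subset_closure (Set.mem_insert_of_mem _ rfl)
    have hkey := braid_pow_conj (m := n - 1) (i : ℕ) i.2
    rw [Fin.eta] at hkey
    have : (PresentedGroup.of i : BraidGroup n)
        = (List.ofFn (fun k : Fin (n - 1) => σ k)).prod ^ (i : ℕ) *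
            σ (⟨0, by omega⟩ : Fin (n - 1)) *
            ((List.ofFn (fun k : Fin (n - 1) => σ k)).prod ^ (i : ℕ))⁻¹ := by
      rw [hprod]; exact hkey.symm
    rw [this]
    exact mul_mem (mul_mem (pow_mem hd _) ha) (inv_mem (pow_mem hd _))
  · set φh : PresentedGroup (twoGenRels n) →* BraidGroup n :=
      PresentedGroup.toGroup (hPhi hn) with hφh
    set ψh : BraidGroup n →* PresentedGroup (twoGenRels n) :=
      PresentedGroup.toGroup (hPsi hn) with hψh
    have hcompψφ : ψh.comp φh = MonoidHom.id _ := by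
      refine PresentedGroup.ext fun x => ?_
      fin_cases x
      · simp only [MonoidHom.comp_apply, MonoidHom.id_apply, hφh, hψh,
          PresentedGroup.toGroup.of, fPhi, Matrix.cons_val_zero, Fin.mk_zero]
        show PresentedGroup.toGroup (hPsi hn) (PresentedGroup.of ⟨0, by omega⟩) = _
        rw [PresentedGroup.toGroup.of]
        simp [fPsi, gA]
      · simp only [MonoidHom.comp_apply, MonoidHom.id_apply, hφh, hψh,
          PresentedGroup.toGroup.of, fPhi, Matrix.cons_val_one, Matrix.head_cons, Fin.mk_one]
        show PresentedGroup.toGroup (hPsi hn) (braidDelta (n - 1)) = _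
        rw [braidDelta, MonoidHom.map_list_prod, List.map_ofFn]
        have hfn : (⇑(PresentedGroup.toGroup (hPsi hn)) ∘
            fun k : Fin (n - 1) => (PresentedGroup.of k : BraidGroup n)) = fPsi n := by
          funext k
          simp [PresentedGroup.toGroup.of]
        rw [hfn]
        exact two_prodB hn
    have hcompφψ : φh.comp ψh = MonoidHom.id _ := by
      refine PresentedGroup.ext fun i => ?_
      simp only [MonoidHom.comp_apply, MonoidHom.id_apply, hφh, hψh, PresentedGroup.toGroup.of]
      show PresentedGroup.toGroup (hPhi hn) (fPsi n i) = _
      simp only [fPsi, gA, gB, map_mul, map_inv, map_pow, PresentedGroup.toGroup.of, fPhi,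
        Matrix.cons_val_zero, Matrix.cons_val_one, Matrix.head_cons]
      have hkey := braid_pow_conj (m := n - 1) (i : ℕ) i.2
      rw [Fin.eta] at hkey
      exact hkey
    refine ⟨MonoidHom.toMulEquiv φh ψh hcompψφ hcompφψ, ?_, ?_⟩
    · show φh (PresentedGroup.of 0) = _
      rw [hφh, PresentedGroup.toGroup.of]
      rfl
    · show φh (PresentedGroup.of 1) = _
      rw [hφh, PresentedGroup.toGroup.of]
      rfl
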